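/- Let E ∈ ℂ^{n×n} be Hermitian, F ∈ ℂ^{m×n}, G ∈ ℂ^{m×m}, q ∈ ℂⁿ, r ∈ ℂᵐ, and let û ∈ ℂⁿ, p̂ ∈ ℂᵐ. Fix positive weights α₁, α₂, α₃, β₁, β₂. Set Q = q − Eû − F*p̂ and R = r − Fû − Gp̂. Define Ŷ₁ = [[α₁⁻¹(ℜ(û)ᵀ⊗Iₙ)J_S^n D_{S,n}⁻¹, −α₁⁻¹(ℑ(û)ᵀ⊗Iₙ)J_SK^n D_{SK,n}⁻¹, α₂⁻¹(Iₙ⊗ℜ(p̂)ᵀ), α₂⁻¹(Iₙ⊗ℑ(p̂)ᵀ)],[α₁⁻¹(ℑ(û)ᵀ⊗Iₙ)J_S^n D_{S,n}⁻¹, α₁⁻¹(ℜ(û)ᵀ⊗Iₙ)J_SK^n D_{SK,n}⁻¹, α₂⁻¹(Iₙ⊗ℑ(p̂)ᵀ), −α₂⁻¹(Iₙ⊗ℜ(p̂)ᵀ)]], Ŷ₂ = [[α₂⁻¹(ℜ(û)ᵀ⊗I_m), −α₂⁻¹(ℑ(û)ᵀ⊗I_m), α₃⁻¹(ℜ(p̂)ᵀ⊗I_m),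 −α₃⁻¹(ℑ(p̂)ᵀ⊗I_m)],[α₂⁻¹(ℑ(û)ᵀ⊗I_m), α₂⁻¹(ℜ(û)ᵀ⊗I_m), α₃⁻¹(ℑ(p̂)ᵀ⊗I_m), α₃⁻¹(ℜ(p̂)ᵀ⊗I_m)]], Y₁ = [Ŷ₁, 0_{2n×2m²}], Y₂ = [0_{2m×n²}, Ŷ₂], I₁ = [−β₁⁻¹I_{2n}, 0_{2n×2m}], I₂ = [0_{2m×2n}, −β₂⁻¹I_{2m}], and M = [[Y₁, I₁],[Y₂, I₂]]. Then MMᵀ is invertible, and the structured backward error without sparsity ξ^{G₁}(û,p̂) := inf{ ζ^{σ₁}(ΔE, ΔF, ΔG, Δq, Δr) : ΔE ∈ ℂ^{n×n} Hermitian, ΔF ∈ ℂ^{m×n}, ΔG ∈ ℂ^{m×m}, Δq ∈ ℂⁿ, Δr ∈ ℂᵐ, (E+ΔE)û + (F+ΔF)*p̂ = q+Δq and (F+ΔF)û + (G+ΔG)p̂ = r+Δr } is attained and equals ‖Mᵀ(MMᵀ)⁻¹[ℜ(Q); ℑ(Q); ℜ(R); ℑ(R)]‖₂. -/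

import Mathlib

open Matrix

noncomputable section

namespace GSPPBE

/-- Entrywise real part of a complex matrix. -/
def reM {I J : Type*} (A : Matrix I J ℂ) : Matrix I J ℝ := A.map Complex.re

/-- Entrywise imaginary part of a complex matrix. -/
def imM {I J : Type*} (A : Matrix I J ℂ) : Matrix I J ℝ := A.map Complex.im

/-- Entrywise real part of a complex vector. -/
def reV {I : Type*} (v : I → ℂ) : I → ℝ := fun i => (v i).re

/-- Entrywise imaginary part of a complex vector. -/
def imV {I : Type*} (v : I → ℂ) : I → ℝ := fun i => (v i).im

/-- Frobenius norm of a matrix. -/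
def frob {I J α : Type*} [Fintype I] [Fintype J] [SeminormedAddGroup α]
    (A : Matrix I J α) : ℝ :=
  Real.sqrt (∑ i, ∑ j, ‖A i j‖ ^ 2)

/-- Euclidean norm of a (finitely indexed) vector. -/
def eunorm {I α : Type*} [Fintype I] [SeminormedAddGroup α] (v : I → α) : ℝ :=
  Real.sqrt (∑ i, ‖v i‖ ^ 2)

/-- Column-major vectorization: `vecM A (j, i) = A i j`. -/
def vecM {I J α : Type*} (A : Matrix I J α) : J × I → α := fun p => A p.2 p.1

/-- Index type for the lower triangle including the diagonal (positions of `vec_S`);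
it has `m(m+1)/2` elements. -/
abbrev SymIdx (m : ℕ) := {p : Fin m × Fin m // p.2 ≤ p.1}

/-- Index type for the strictly lower triangle (positions of `vec_SK`);
it has `m(m-1)/2` elements. -/
abbrev SkewIdx (m : ℕ) := {p : Fin m × Fin m // p.2 < p.1}

/-- `vec_S` of a (symmetric) matrix: its lower-triangular entries `Z i j`, `j ≤ i`. -/
def vecS {m : ℕ} {α : Type*} (Z : Matrix (Fin m) (Fin m) α) : SymIdx m → α :=
  fun p => Z p.1.1 p.1.2

/-- `vec_SK` of a (skew-symmetric) matrix: its strictly lower-triangular entries `Z i j`, `j < i`. -/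
def vecSK {m : ℕ} {α : Type*} (Z : Matrix (Fin m) (Fin m) α) : SkewIdx m → α :=
  fun p => Z p.1.1 p.1.2

/-- `J_S^m`: its column at position `(i,j)`, `j ≤ i`, is `vec(eᵢeⱼᵀ + eⱼeᵢᵀ)` for `i > j` and
`vec(eⱼeⱼᵀ)` for `i = j`.  Rows are vec positions `(column, row)`. -/
def JS (m : ℕ) : Matrix (Fin m × Fin m) (SymIdx m) ℝ :=
  Matrix.of fun cr p =>
    (if cr.2 = p.1.1 ∧ cr.1 = p.1.2 then (1 : ℝ) else 0) +
    (if p.1.1 ≠ p.1.2 ∧ cr.2 = p.1.2 ∧ cr.1 = p.1.1 then 1 else 0)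

/-- `J_SK^m`: its column at position `(i,j)`, `j < i`, is `vec(eᵢeⱼᵀ − eⱼeᵢᵀ)`. -/
def JSK (m : ℕ) : Matrix (Fin m × Fin m) (SkewIdx m) ℝ :=
  Matrix.of fun cr p =>
    (if cr.2 = p.1.1 ∧ cr.1 = p.1.2 then (1 : ℝ) else 0) -
    (if cr.2 = p.1.2 ∧ cr.1 = p.1.1 then 1 else 0)

open Classical in
/-- Sign pattern `Θ_X` of a matrix, with values in the same ring. -/
def theta {I J α : Type*} [Zero α] [One α] (X : Matrix I J α) : Matrix I J α :=
  Matrix.of fun i j => if X i j = 0 then 0 else 1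

open Classical in
/-- Real-valued sign pattern `Θ_X` of a matrix. -/
def thetaR {I J α : Type*} [Zero α] (X : Matrix I J α) : Matrix I J ℝ :=
  Matrix.of fun i j => if X i j = 0 then 0 else 1

/-- `Φ_X = diag(vec_S(Θ_X))`. -/
def Phi {m : ℕ} {α : Type*} [Zero α] (X : Matrix (Fin m) (Fin m) α) :
    Matrix (SymIdx m) (SymIdx m) ℝ :=
  Matrix.diagonal (vecS (thetaR X))

/-- `Ψ_X`: diagonal matrix listing the strictly lower-triangular entries of `Θ_X`
in `vec_SK` ordering. -/
def Psi {m : ℕ} {α : Type*} [Zero α] (X : Matrix (Fin m) (Fin m) α) :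
    Matrix (SkewIdx m) (SkewIdx m) ℝ :=
  Matrix.diagonal (vecSK (thetaR X))

/-- `Σ_X = diag(vec(Θ_X))`. -/
def Sig {I J α : Type*} [DecidableEq I] [DecidableEq J] [Zero α]
    (X : Matrix I J α) : Matrix (J × I) (J × I) ℝ :=
  Matrix.diagonal (vecM (thetaR X))

/-- `D_{S,m}`: diagonal entry `1` at the positions of diagonal entries `(j,j)`, `√2` elsewhere. -/
def DS (m : ℕ) : Matrix (SymIdx m) (SymIdx m) ℝ :=
  Matrix.diagonal fun p => if p.1.1 = p.1.2 then 1 else Real.sqrt 2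

/-- `D_{SK,m} = √2·I`. -/
def DSK (m : ℕ) : Matrix (SkewIdx m) (SkewIdx m) ℝ :=
  Matrix.diagonal fun _ => Real.sqrt 2

/-- `uᵀ ⊗ I_b`, viewed as a matrix acting on column-major vectorizations of `b×a` matrices. -/
def rowKronId {a b : ℕ} (u : Fin a → ℝ) : Matrix (Fin b) (Fin a × Fin b) ℝ :=
  Matrix.of fun r p => u p.1 * (if r = p.2 then 1 else 0)

/-- `I_a ⊗ vᵀ`, viewed as a matrix acting on column-major vectorizations of `b×a` matrices. -/
def idKronRow {a b : ℕ} (v : Fin b → ℝ) : Matrix (Fin a) (Fin a × Fin b) ℝ :=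
  Matrix.of fun r p => (if r = p.1 then 1 else 0) * v p.2

/-- The weighted norm `ζ^{σ₁}(A,B,C,q,r)`. -/
def zeta1 {n m : ℕ} {α : Type*} [SeminormedAddGroup α]
    (α₁ α₂ α₃ β₁ β₂ : ℝ)
    (A : Matrix (Fin n) (Fin n) α) (B : Matrix (Fin m) (Fin n) α)
    (C : Matrix (Fin m) (Fin m) α) (q : Fin n → α) (r : Fin m → α) : ℝ :=
  Real.sqrt (α₁ ^ 2 * frob A ^ 2 + α₂ ^ 2 * frob B ^ 2 + α₃ ^ 2 * frob C ^ 2 +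
    β₁ ^ 2 * eunorm q ^ 2 + β₂ ^ 2 * eunorm r ^ 2)

/-- The weighted norm `ζ^{σ₂}(A,B,H,C,q,r)`. -/
def zeta2 {n m : ℕ} {α : Type*} [SeminormedAddGroup α]
    (α₁ α₂ α₃ α₄ β₁ β₂ : ℝ)
    (A : Matrix (Fin n) (Fin n) α) (B : Matrix (Fin m) (Fin n) α)
    (H : Matrix (Fin m) (Fin n) α) (C : Matrix (Fin m) (Fin m) α)
    (q : Fin n → α) (r : Fin m → α) : ℝ :=
  Real.sqrt (α₁ ^ 2 * frob A ^ 2 + α₂ ^ 2 * frob B ^ 2 + α₃ ^ 2 * frob H ^ 2 +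
    α₄ ^ 2 * frob C ^ 2 + β₁ ^ 2 * eunorm q ^ 2 + β₂ ^ 2 * eunorm r ^ 2)

/-! ### Auxiliary lemmas -/

section Aux

open Matrix

lemma cnorm_sq (z : ℂ) : ‖z‖ ^ 2 = z.re ^ 2 + z.im ^ 2 := by
  rw [Complex.sq_norm, Complex.normSq_apply]; ring

lemma eunorm_sq_real {I : Type*} [Fintype I] (v : I → ℝ) :
    eunorm v ^ 2 = ∑ i, v i ^ 2 := by
  rw [eunorm, Real.sq_sqrt (Finset.sum_nonneg fun i _ => sq_nonneg _)]
  simp [sq_abs]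

lemma eunorm_nonneg {I : Type*} [Fintype I] (v : I → ℝ) : 0 ≤ eunorm v :=
  Real.sqrt_nonneg _

lemma frob_sq {I J : Type*} [Fintype I] [Fintype J] (A : Matrix I J ℂ) :
    frob A ^ 2 = ∑ i, ∑ j, ((A i j).re ^ 2 + (A i j).im ^ 2) := by
  rw [frob, Real.sq_sqrt (by positivity)]
  simp only [cnorm_sq]

lemma rowKronId_mulVec {a b : ℕ} (u : Fin a → ℝ) (A : Matrix (Fin b) (Fin a) ℝ) :
    rowKronId u *ᵥ vecM A = A *ᵥ u := by
  funext r
  simp only [rowKronId, vecM, mulVec, dotProduct, of_apply, Fintype.sum_prod_type,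
    mul_ite, mul_one, mul_zero, ite_mul, zero_mul]
  simp [mul_comm]

lemma idKronRow_mulVec {a b : ℕ} (v : Fin b → ℝ) (A : Matrix (Fin b) (Fin a) ℝ) :
    idKronRow v *ᵥ vecM A = Aᵀ *ᵥ v := by
  funext r
  simp only [idKronRow, vecM, mulVec, dotProduct, of_apply, Fintype.sum_prod_type,
    mul_ite, mul_one, mul_zero, ite_mul, zero_mul, one_mul]
  simp [transpose_apply, mul_comm]

end Aux

section Aux2
open Matrix

lemma sqrt2_ne : (Real.sqrt 2) ≠ 0 := by positivity

lemma DS_inv (k : ℕ) : (DS k)⁻¹ =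
    Matrix.diagonal (fun p : SymIdx k => if p.1.1 = p.1.2 then 1 else (Real.sqrt 2)⁻¹) := by
  apply inv_eq_right_inv
  rw [DS, diagonal_mul_diagonal, ← diagonal_one]
  refine congrArg Matrix.diagonal (funext fun p => ?_)
  rcases eq_or_ne p.1.1 p.1.2 with h | h <;>
    simp [h, Pi.mul_apply, mul_inv_cancel₀ sqrt2_ne]

lemma DSK_inv (k : ℕ) : (DSK k)⁻¹ =
    Matrix.diagonal (fun _ : SkewIdx k => (Real.sqrt 2)⁻¹) := by
  apply inv_eq_right_inv
  rw [DSK, diagonal_mul_diagonal, ← diagonal_one]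
  refine congrArg Matrix.diagonal (funext fun p => ?_)
  simp [Pi.mul_apply, mul_inv_cancel₀ sqrt2_ne]

lemma JS_mulVec {k : ℕ} (S : Matrix (Fin k) (Fin k) ℝ) (hS : ∀ i j, S j i = S i j) :
    JS k *ᵥ vecS S = vecM S := by
  funext cr
  obtain ⟨c, r⟩ := cr
  simp only [mulVec, dotProduct, vecM]
  rcases le_or_gt c r with h | h
  · rw [Finset.sum_eq_single (⟨(r, c), h⟩ : SymIdx k)]
    · have hne : ¬((r : Fin k) ≠ c ∧ r = c ∧ c = r) := by
        rintro ⟨h1, h2, -⟩; exact h1 h2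
      simp [JS, vecS, hne]
    · rintro ⟨⟨i, j⟩, hji⟩ - hp
      have h1 : ¬(r = i ∧ c = j) := by
        rintro ⟨rfl, rfl⟩; exact hp rfl
      have h2 : ¬(i ≠ j ∧ r = j ∧ c = i) := by
        rintro ⟨hij, rfl, rfl⟩
        exact hij (le_antisymm h hji)
      simp [JS, vecS, h1, h2]
    · exact fun habs => absurd (Finset.mem_univ _) habs
  · rw [Finset.sum_eq_single (⟨(c, r), h.le⟩ : SymIdx k)]
    · have h1 : ¬((r : Fin k) = c ∧ c = r) := by
        rintro ⟨h1, -⟩; exact absurd h1 h.ne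
      have h2 : ((c : Fin k) ≠ r ∧ r = r ∧ c = c) := ⟨h.ne', rfl, rfl⟩
      simp [JS, vecS, h1, h2, hS r c]
    · rintro ⟨⟨i, j⟩, hji⟩ - hp
      have h1 : ¬(r = i ∧ c = j) := by
        rintro ⟨rfl, rfl⟩; exact absurd hji (not_le.mpr h)
      have h2 : ¬(i ≠ j ∧ r = j ∧ c = i) := by
        rintro ⟨hij, rfl, rfl⟩; exact hp rfl
      simp [JS, vecS, h1, h2]
    · exact fun habs => absurd (Finset.mem_univ _) habs

lemma JSK_mulVec {k : ℕ} (K : Matrix (Fin k) (Fin k) ℝ) (hK : ∀ i j, K j i = -K i j) :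
    JSK k *ᵥ vecSK K = vecM K := by
  funext cr
  obtain ⟨c, r⟩ := cr
  simp only [mulVec, dotProduct, vecM]
  rcases lt_trichotomy c r with h | h | h
  · rw [Finset.sum_eq_single (⟨(r, c), h⟩ : SkewIdx k)]
    · have hne : ¬((r : Fin k) = c ∧ c = r) := by
        rintro ⟨h1, -⟩; exact absurd h1 h.ne'
      simp [JSK, vecSK, hne]
    · rintro ⟨⟨i, j⟩, hji⟩ - hp
      have h1 : ¬(r = i ∧ c = j) := by
        rintro ⟨rfl, rfl⟩; exact hp rfl
      have h2 : ¬(r = j ∧ c = i) := by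
        rintro ⟨rfl, rfl⟩; exact absurd (hji.trans h) (lt_irrefl _)
      simp [JSK, vecSK, h1, h2]
    · exact fun habs => absurd (Finset.mem_univ _) habs
  · rw [Finset.sum_eq_zero, show K r c = 0 by rw [h]; have := hK r r; linarith]
    rintro ⟨⟨i, j⟩, hji⟩ -
    have h1 : ¬(r = i ∧ c = j) := by
      rintro ⟨rfl, rfl⟩; exact absurd (h ▸ hji) (lt_irrefl _)
    have h2 : ¬(r = j ∧ c = i) := by
      rintro ⟨rfl, rfl⟩; exact absurd (h ▸ hji) (lt_irrefl _)
    simp [JSK, vecSK, h1, h2]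
  · rw [Finset.sum_eq_single (⟨(c, r), h⟩ : SkewIdx k)]
    · have h1 : ¬((r : Fin k) = c ∧ c = r) := by
        rintro ⟨h1, -⟩; exact absurd h1 h.ne
      simp [JSK, vecSK, h1, hK r c]
    · rintro ⟨⟨i, j⟩, hji⟩ - hp
      have h1 : ¬(r = i ∧ c = j) := by
        rintro ⟨rfl, rfl⟩; exact absurd (hji.trans h) (lt_irrefl _)
      have h2 : ¬(r = j ∧ c = i) := by
        rintro ⟨rfl, rfl⟩; exact hp rfl
      simp [JSK, vecSK, h1, h2]
    · exact fun habs => absurd (Finset.mem_univ _) habs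

end Aux2

section Aux3
open Matrix

def triEquiv (k : ℕ) : (SymIdx k ⊕ SkewIdx k) ≃ (Fin k × Fin k) where
  toFun := Sum.elim (fun p => p.1) (fun p => (p.1.2, p.1.1))
  invFun q := if h : q.2 ≤ q.1 then Sum.inl ⟨q, h⟩ else Sum.inr ⟨(q.2, q.1), not_le.mp h⟩
  left_inv s := by
    rcases s with p | p
    · simp [p.2]
    · have h : ¬((p.1.2, p.1.1).2 ≤ (p.1.2, p.1.1).1) := not_le.mpr p.2
      exact dif_neg (not_le.mpr p.2)
  right_inv q := by
    by_cases h : q.2 ≤ q.1 <;> simp [h]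

def symEquiv (k : ℕ) : (Fin k ⊕ SkewIdx k) ≃ SymIdx k where
  toFun := Sum.elim (fun i => ⟨(i, i), le_refl i⟩) (fun p => ⟨p.1, p.2.le⟩)
  invFun p := if h : p.1.2 < p.1.1 then Sum.inr ⟨p.1, h⟩ else Sum.inl p.1.1
  left_inv s := by
    rcases s with i | p
    · simp
    · exact dif_pos p.2
  right_inv p := by
    by_cases h : p.1.2 < p.1.1
    · simp [h]
    · have he : p.1.2 = p.1.1 := le_antisymm p.2 (not_lt.mp h)
      simp only [h, dite_false, Sum.elim_inl]
      exact Subtype.ext (Prod.ext rfl he.symm)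

lemma tri_sum {k : ℕ} (f : Fin k × Fin k → ℝ) :
    ∑ q : Fin k × Fin k, f q
      = (∑ p : SymIdx k, f p.1) + ∑ p : SkewIdx k, f (p.1.2, p.1.1) := by
  rw [← Equiv.sum_comp (triEquiv k) f, Fintype.sum_sum_type]
  rfl

lemma sym_sum {k : ℕ} (g : SymIdx k → ℝ) :
    ∑ p : SymIdx k, g p
      = (∑ i : Fin k, g ⟨(i, i), le_refl i⟩) + ∑ p : SkewIdx k, g ⟨p.1, p.2.le⟩ := by
  rw [← Equiv.sum_comp (symEquiv k) g, Fintype.sum_sum_type]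
  rfl

lemma herm_sum {k : ℕ} (A : Matrix (Fin k) (Fin k) ℂ) (hH : A.IsHermitian) :
    (∑ p : SymIdx k, ((if p.1.1 = p.1.2 then (1:ℝ) else Real.sqrt 2) * (A p.1.1 p.1.2).re) ^ 2)
      + (∑ p : SkewIdx k, (Real.sqrt 2 * (A p.1.1 p.1.2).im) ^ 2)
      = ∑ i, ∑ j, ((A i j).re ^ 2 + (A i j).im ^ 2) := by
  have hre : ∀ i j, (A j i).re = (A i j).re := fun i j => by
    rw [← hH.apply i j]; simp
  have him : ∀ i j, (A j i).im = -(A i j).im := fun i j => by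
    rw [← hH.apply i j]; simp
  have hdiag : ∀ i, (A i i).im = 0 := fun i => by
    have := him i i; linarith
  have hp : (∑ i, ∑ j, ((A i j).re ^ 2 + (A i j).im ^ 2))
      = ∑ q : Fin k × Fin k, ((A q.1 q.2).re ^ 2 + (A q.1 q.2).im ^ 2) :=
    (Fintype.sum_prod_type (f := fun q : Fin k × Fin k => (A q.1 q.2).re ^ 2 + (A q.1 q.2).im ^ 2)).symm
  rw [hp, tri_sum (fun q => (A q.1 q.2).re ^ 2 + (A q.1 q.2).im ^ 2)]
  rw [sym_sum (fun p => ((if p.1.1 = p.1.2 then (1:ℝ) else Real.sqrt 2) * (A p.1.1 p.1.2).re) ^ 2),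
    sym_sum (fun p => (A p.1.1 p.1.2).re ^ 2 + (A p.1.1 p.1.2).im ^ 2)]
  have h2 : (Real.sqrt 2) ^ 2 = 2 := Real.sq_sqrt (by norm_num)
  have e1 : ∀ p : SkewIdx k,
      ((if ((⟨p.1, p.2.le⟩ : SymIdx k)).1.1 = ((⟨p.1, p.2.le⟩ : SymIdx k)).1.2 then (1:ℝ)
        else Real.sqrt 2) * (A p.1.1 p.1.2).re) ^ 2 = 2 * (A p.1.1 p.1.2).re ^ 2 := by
    intro p
    have : ¬ (p.1.1 = p.1.2) := fun e => absurd e (ne_of_gt p.2)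
    rw [if_neg this, mul_pow, h2]
  have e2 : ∀ p : SkewIdx k,
      (Real.sqrt 2 * (A p.1.1 p.1.2).im) ^ 2 = 2 * (A p.1.1 p.1.2).im ^ 2 := by
    intro p; rw [mul_pow, h2]
  have e3 : ∀ p : SkewIdx k,
      (A (p.1.2, p.1.1).1 (p.1.2, p.1.1).2).re ^ 2 + (A (p.1.2, p.1.1).1 (p.1.2, p.1.1).2).im ^ 2
        = (A p.1.1 p.1.2).re ^ 2 + (A p.1.1 p.1.2).im ^ 2 := by
    intro p
    simp only
    rw [hre p.1.1 p.1.2, him p.1.1 p.1.2]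
    ring
  rw [Finset.sum_congr rfl fun p _ => e1 p, Finset.sum_congr rfl fun p _ => e2 p,
    Finset.sum_congr rfl fun p _ => e3 p]
  have e4 : ∀ i : Fin k,
      ((if (i : Fin k) = i then (1:ℝ) else Real.sqrt 2) * (A i i).re) ^ 2
        = (A i i).re ^ 2 := by
    intro i; rw [if_pos rfl, one_mul]
  have e5 : ∀ i : Fin k, (A i i).re ^ 2 + (A i i).im ^ 2 = (A i i).re ^ 2 := by
    intro i; rw [hdiag i]; ring
  rw [Finset.sum_congr rfl fun i _ => e4 i, Finset.sum_congr rfl fun i _ => e5 i]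
  rw [Finset.sum_congr rfl fun (p : SkewIdx k) _ =>
      (two_mul ((A p.1.1 p.1.2).re ^ 2)),
    Finset.sum_congr rfl fun (p : SkewIdx k) _ =>
      (two_mul ((A p.1.1 p.1.2).im ^ 2)),
    Finset.sum_add_distrib, Finset.sum_add_distrib, Finset.sum_add_distrib]
  ring

end Aux3

section Aux4
open Matrix

/-- Encoded symmetric (real part) component. -/
def encE1 {k : ℕ} (c : ℝ) (A : Matrix (Fin k) (Fin k) ℂ) : SymIdx k → ℝ :=
  fun p => c * ((if p.1.1 = p.1.2 then (1:ℝ) else Real.sqrt 2) * (A p.1.1 p.1.2).re)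

/-- Encoded skew (imaginary part) component. -/
def encE2 {k : ℕ} (c : ℝ) (A : Matrix (Fin k) (Fin k) ℂ) : SkewIdx k → ℝ :=
  fun p => c * (Real.sqrt 2 * (A p.1.1 p.1.2).im)

/-- Encoded vec component of a real matrix. -/
def encV {a b : ℕ} (c : ℝ) (B : Matrix (Fin b) (Fin a) ℝ) : Fin a × Fin b → ℝ :=
  fun pr => c * B pr.2 pr.1

lemma symFull {k : ℕ} (a c : ℝ) (u : Fin k → ℝ) (A : Matrix (Fin k) (Fin k) ℂ)
    (hre : ∀ i j, (A j i).re = (A i j).re) :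
    (a • (rowKronId u * (JS k * (DS k)⁻¹))) *ᵥ encE1 c A = (a * c) • (reM A *ᵥ u) := by
  have h1 : (DS k)⁻¹ *ᵥ encE1 c A = c • vecS (reM A) := by
    funext p
    rw [DS_inv, mulVec_diagonal]
    rcases eq_or_ne p.1.1 p.1.2 with h | h
    · simp [encE1, h, vecS, reM]
    · simp only [encE1, if_neg h, vecS, reM, Pi.smul_apply, smul_eq_mul, Matrix.map_apply]
      rw [← mul_assoc, ← mul_assoc]
      rw [mul_comm ((Real.sqrt 2)⁻¹) c, mul_assoc c, inv_mul_cancel₀ sqrt2_ne, mul_one]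
  rw [smul_mulVec]
  erw [← mulVec_mulVec, ← mulVec_mulVec]
  rw [h1, mulVec_smul,
    JS_mulVec (reM A) hre, mulVec_smul, rowKronId_mulVec, smul_smul]

lemma skewFull {k : ℕ} (a c : ℝ) (u : Fin k → ℝ) (A : Matrix (Fin k) (Fin k) ℂ)
    (him : ∀ i j, (A j i).im = -(A i j).im) :
    (a • (rowKronId u * (JSK k * (DSK k)⁻¹))) *ᵥ encE2 c A = (a * c) • (imM A *ᵥ u) := by
  have h1 : (DSK k)⁻¹ *ᵥ encE2 c A = c • vecSK (imM A) := by
    funext p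
    rw [DSK_inv, mulVec_diagonal]
    simp only [encE2, vecSK, imM, Pi.smul_apply, smul_eq_mul, Matrix.map_apply]
    rw [← mul_assoc, ← mul_assoc]
    rw [mul_comm ((Real.sqrt 2)⁻¹) c, mul_assoc c, inv_mul_cancel₀ sqrt2_ne, mul_one]
  rw [smul_mulVec]
  erw [← mulVec_mulVec, ← mulVec_mulVec]
  rw [h1, mulVec_smul,
    JSK_mulVec (imM A) him, mulVec_smul, rowKronId_mulVec, smul_smul]

lemma rowFull {a b : ℕ} (s c : ℝ) (u : Fin a → ℝ) (B : Matrix (Fin b) (Fin a) ℝ) :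
    (s • rowKronId u) *ᵥ encV c B = (s * c) • (B *ᵥ u) := by
  have h1 : encV c B = c • vecM B := rfl
  rw [h1, smul_mulVec, mulVec_smul, rowKronId_mulVec, smul_smul]

lemma colFull {a b : ℕ} (s c : ℝ) (v : Fin b → ℝ) (B : Matrix (Fin b) (Fin a) ℝ) :
    (s • idKronRow v) *ᵥ encV c B = (s * c) • (Bᵀ *ᵥ v) := by
  have h1 : encV c B = c • vecM B := rfl
  rw [h1, smul_mulVec, mulVec_smul, idKronRow_mulVec, smul_smul]

lemma idFull {ι : Type*} [Fintype ι] [DecidableEq ι] (s c : ℝ) (v : ι → ℝ) :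
    (s • (1 : Matrix ι ι ℝ)) *ᵥ (fun i => c * v i) = (s * c) • v := by
  have h1 : (fun i => c * v i) = c • v := rfl
  rw [h1, smul_mulVec, mulVec_smul, one_mulVec, smul_smul]

end Aux4

section Aux5
open Matrix

variable {n m : ℕ}

/-- The real coordinate vector encoding a perturbation tuple. -/
def encodeV (α₁ α₂ α₃ β₁ β₂ : ℝ)
    (ΔE : Matrix (Fin n) (Fin n) ℂ) (ΔF : Matrix (Fin m) (Fin n) ℂ)
    (ΔG : Matrix (Fin m) (Fin m) ℂ) (Δq : Fin n → ℂ) (Δr : Fin m → ℂ) :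
    ((SymIdx n ⊕ SkewIdx n) ⊕
      (((Fin n × Fin m) ⊕ (Fin n × Fin m)) ⊕ ((Fin m × Fin m) ⊕ (Fin m × Fin m)))) ⊕
      ((Fin n ⊕ Fin n) ⊕ (Fin m ⊕ Fin m)) → ℝ :=
  Sum.elim
    (Sum.elim
      (Sum.elim (encE1 α₁ ΔE) (encE2 α₁ ΔE))
      (Sum.elim
        (Sum.elim (encV α₂ (reM ΔF)) (encV α₂ (imM ΔF)))
        (Sum.elim (encV α₃ (reM ΔG)) (encV α₃ (imM ΔG)))))
    (Sum.elim
      (fun i => β₁ * (Sum.elim (reV Δq) (imV Δq)) i)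
      (fun i => β₂ * (Sum.elim (reV Δr) (imV Δr)) i))

lemma reC1 (A : Matrix (Fin n) (Fin n) ℂ) (B : Matrix (Fin m) (Fin n) ℂ)
    (uh : Fin n → ℂ) (ph : Fin m → ℂ) (dq : Fin n → ℂ) :
    reV (A *ᵥ uh + Bᴴ *ᵥ ph - dq)
      = (reM A *ᵥ reV uh - imM A *ᵥ imV uh)
        + ((reM B)ᵀ *ᵥ reV ph + (imM B)ᵀ *ᵥ imV ph) - reV dq := by
  funext i
  simp only [reV, imV, reM, imM, Pi.add_apply, Pi.sub_apply, Complex.add_re, Complex.sub_re,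
    mulVec, dotProduct, transpose_apply, Matrix.map_apply, conjTranspose_apply,
    Complex.re_sum, Complex.mul_re, Complex.conj_re, Complex.conj_im, RCLike.star_def]
  simp only [neg_mul, Finset.sum_add_distrib, Finset.sum_sub_distrib, Finset.sum_neg_distrib]
  ring

lemma imC1 (A : Matrix (Fin n) (Fin n) ℂ) (B : Matrix (Fin m) (Fin n) ℂ)
    (uh : Fin n → ℂ) (ph : Fin m → ℂ) (dq : Fin n → ℂ) :
    imV (A *ᵥ uh + Bᴴ *ᵥ ph - dq)
      = (reM A *ᵥ imV uh + imM A *ᵥ reV uh)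
        + ((reM B)ᵀ *ᵥ imV ph - (imM B)ᵀ *ᵥ reV ph) - imV dq := by
  funext i
  simp only [reV, imV, reM, imM, Pi.add_apply, Pi.sub_apply, Complex.add_im, Complex.sub_im,
    mulVec, dotProduct, transpose_apply, Matrix.map_apply, conjTranspose_apply,
    Complex.im_sum, Complex.mul_im, Complex.conj_re, Complex.conj_im, RCLike.star_def]
  simp only [neg_mul, Finset.sum_add_distrib, Finset.sum_sub_distrib, Finset.sum_neg_distrib]
  ring

lemma reC2 (B : Matrix (Fin m) (Fin n) ℂ) (C : Matrix (Fin m) (Fin m) ℂ)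
    (uh : Fin n → ℂ) (ph : Fin m → ℂ) (dr : Fin m → ℂ) :
    reV (B *ᵥ uh + C *ᵥ ph - dr)
      = (reM B *ᵥ reV uh - imM B *ᵥ imV uh)
        + (reM C *ᵥ reV ph - imM C *ᵥ imV ph) - reV dr := by
  funext i
  simp only [reV, imV, reM, imM, Pi.add_apply, Pi.sub_apply, Complex.add_re, Complex.sub_re,
    mulVec, dotProduct, Matrix.map_apply, Complex.re_sum, Complex.mul_re]
  simp only [neg_mul, Finset.sum_add_distrib, Finset.sum_sub_distrib, Finset.sum_neg_distrib]

lemma imC2 (B : Matrix (Fin m) (Fin n) ℂ) (C : Matrix (Fin m) (Fin m) ℂ)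
    (uh : Fin n → ℂ) (ph : Fin m → ℂ) (dr : Fin m → ℂ) :
    imV (B *ᵥ uh + C *ᵥ ph - dr)
      = (reM B *ᵥ imV uh + imM B *ᵥ reV uh)
        + (reM C *ᵥ imV ph + imM C *ᵥ reV ph) - imV dr := by
  funext i
  simp only [reV, imV, reM, imM, Pi.add_apply, Pi.sub_apply, Complex.add_im, Complex.sub_im,
    mulVec, dotProduct, Matrix.map_apply, Complex.im_sum, Complex.mul_im]
  simp only [neg_mul, Finset.sum_add_distrib, Finset.sum_sub_distrib, Finset.sum_neg_distrib]

end Aux5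

section Aux6
open Matrix

lemma claimA {n m : ℕ} (uh : Fin n → ℂ) (ph : Fin m → ℂ) (α₁ α₂ α₃ β₁ β₂ : ℝ)
    (h1 : α₁ ≠ 0) (h2 : α₂ ≠ 0) (h3 : α₃ ≠ 0) (h4 : β₁ ≠ 0) (h5 : β₂ ≠ 0)
    (ΔE : Matrix (Fin n) (Fin n) ℂ) (ΔF : Matrix (Fin m) (Fin n) ℂ)
    (ΔG : Matrix (Fin m) (Fin m) ℂ) (Δq : Fin n → ℂ) (Δr : Fin m → ℂ)
    (hH : ΔE.IsHermitian) :
    (fromBlocks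
      (fromCols
        (fromRows
          (fromCols (α₁⁻¹ • (rowKronId (reV uh) * (JS n * (DS n)⁻¹)))
            ((-(α₁⁻¹)) • (rowKronId (imV uh) * (JSK n * (DSK n)⁻¹))))
          (fromCols (α₁⁻¹ • (rowKronId (imV uh) * (JS n * (DS n)⁻¹)))
            (α₁⁻¹ • (rowKronId (reV uh) * (JSK n * (DSK n)⁻¹)))))
        (fromCols
          (fromRows
            (fromCols (α₂⁻¹ • idKronRow (reV ph)) (α₂⁻¹ • idKronRow (imV ph)))
            (fromCols (α₂⁻¹ • idKronRow (imV ph)) ((-(α₂⁻¹)) • idKronRow (reV ph))))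
          0))
      (fromCols ((-(β₁⁻¹)) • (1 : Matrix (Fin n ⊕ Fin n) (Fin n ⊕ Fin n) ℝ)) 0)
      (fromCols 0
        (fromCols
          (fromRows
            (fromCols (α₂⁻¹ • rowKronId (reV uh)) ((-(α₂⁻¹)) • rowKronId (imV uh)))
            (fromCols (α₂⁻¹ • rowKronId (imV uh)) (α₂⁻¹ • rowKronId (reV uh))))
          (fromRows
            (fromCols (α₃⁻¹ • rowKronId (reV ph)) ((-(α₃⁻¹)) • rowKronId (imV ph)))
            (fromCols (α₃⁻¹ • rowKronId (imV ph)) (α₃⁻¹ • rowKronId (reV ph))))))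
      (fromCols 0 ((-(β₂⁻¹)) • (1 : Matrix (Fin m ⊕ Fin m) (Fin m ⊕ Fin m) ℝ))))
    *ᵥ encodeV α₁ α₂ α₃ β₁ β₂ ΔE ΔF ΔG Δq Δr
    = Sum.elim
        (Sum.elim (reV (ΔE *ᵥ uh + ΔFᴴ *ᵥ ph - Δq)) (imV (ΔE *ᵥ uh + ΔFᴴ *ᵥ ph - Δq)))
        (Sum.elim (reV (ΔF *ᵥ uh + ΔG *ᵥ ph - Δr)) (imV (ΔF *ᵥ uh + ΔG *ᵥ ph - Δr))) := by
  have hre : ∀ i j, (ΔE j i).re = (ΔE i j).re := fun i j => by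
    rw [← hH.apply i j]; simp
  have him : ∀ i j, (ΔE j i).im = -(ΔE i j).im := fun i j => by
    rw [← hH.apply i j]; simp
  unfold encodeV
  simp only [fromBlocks_mulVec, Sum.elim_comp_inl, Sum.elim_comp_inr,
    fromCols_mulVec_sumElim, fromRows_mulVec, zero_mulVec, add_zero, zero_add]
  rw [symFull α₁⁻¹ α₁ (reV uh) ΔE hre, skewFull (-(α₁⁻¹)) α₁ (imV uh) ΔE him,
      symFull α₁⁻¹ α₁ (imV uh) ΔE hre, skewFull α₁⁻¹ α₁ (reV uh) ΔE him,
      colFull α₂⁻¹ α₂ (reV ph) (reM ΔF), colFull α₂⁻¹ α₂ (imV ph) (imM ΔF),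
      colFull α₂⁻¹ α₂ (imV ph) (reM ΔF), colFull (-(α₂⁻¹)) α₂ (reV ph) (imM ΔF),
      rowFull α₂⁻¹ α₂ (reV uh) (reM ΔF), rowFull (-(α₂⁻¹)) α₂ (imV uh) (imM ΔF),
      rowFull α₂⁻¹ α₂ (imV uh) (reM ΔF), rowFull α₂⁻¹ α₂ (reV uh) (imM ΔF),
      rowFull α₃⁻¹ α₃ (reV ph) (reM ΔG), rowFull (-(α₃⁻¹)) α₃ (imV ph) (imM ΔG),
      rowFull α₃⁻¹ α₃ (imV ph) (reM ΔG), rowFull α₃⁻¹ α₃ (reV ph) (imM ΔG),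
      idFull (-(β₁⁻¹)) β₁ (Sum.elim (reV Δq) (imV Δq)),
      idFull (-(β₂⁻¹)) β₂ (Sum.elim (reV Δr) (imV Δr))]
  have c1 : α₁⁻¹ * α₁ = 1 := inv_mul_cancel₀ h1
  have c2 : α₂⁻¹ * α₂ = 1 := inv_mul_cancel₀ h2
  have c3 : α₃⁻¹ * α₃ = 1 := inv_mul_cancel₀ h3
  have d1 : -(α₁⁻¹) * α₁ = -1 := by rw [neg_mul, c1]
  have d2 : -(α₂⁻¹) * α₂ = -1 := by rw [neg_mul, c2]
  have d3 : -(α₃⁻¹) * α₃ = -1 := by rw [neg_mul, c3]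
  have d4 : -(β₁⁻¹) * β₁ = -1 := by rw [neg_mul, inv_mul_cancel₀ h4]
  have d5 : -(β₂⁻¹) * β₂ = -1 := by rw [neg_mul, inv_mul_cancel₀ h5]
  simp only [c1, c2, c3, d1, d2, d3, d4, d5, one_smul, neg_one_smul]
  rw [reC1, imC1, reC2, imC2]
  funext s
  rcases s with (i | i) | (i | i) <;>
    simp only [Sum.elim_inl, Sum.elim_inr, Pi.add_apply, Pi.sub_apply, Pi.neg_apply,
      Pi.zero_apply, Pi.smul_apply, smul_eq_mul] <;>
    ring

end Aux6

section Aux7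
open Matrix

lemma eunorm_sq_complex {I : Type*} [Fintype I] (v : I → ℂ) :
    eunorm v ^ 2 = ∑ i, ((v i).re ^ 2 + (v i).im ^ 2) := by
  rw [eunorm, Real.sq_sqrt (by positivity)]
  simp only [cnorm_sq]

lemma sq_sum_swap {a b : ℕ} (X : Matrix (Fin b) (Fin a) ℝ) (c : ℝ) :
    ∑ pr : Fin a × Fin b, (c * X pr.2 pr.1) ^ 2 = c ^ 2 * ∑ i, ∑ j, X i j ^ 2 := by
  rw [Fintype.sum_prod_type, Finset.sum_comm]
  simp only [mul_pow]
  rw [Finset.mul_sum]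
  exact Finset.sum_congr rfl fun i _ => by rw [Finset.mul_sum]

lemma claimB {n m : ℕ} (α₁ α₂ α₃ β₁ β₂ : ℝ)
    (ΔE : Matrix (Fin n) (Fin n) ℂ) (ΔF : Matrix (Fin m) (Fin n) ℂ)
    (ΔG : Matrix (Fin m) (Fin m) ℂ) (Δq : Fin n → ℂ) (Δr : Fin m → ℂ)
    (hH : ΔE.IsHermitian) :
    eunorm (encodeV α₁ α₂ α₃ β₁ β₂ ΔE ΔF ΔG Δq Δr)
      = zeta1 α₁ α₂ α₃ β₁ β₂ ΔE ΔF ΔG Δq Δr := by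
  rw [eunorm, zeta1]
  congr 1
  unfold encodeV
  simp only [Fintype.sum_sum_type, Sum.elim_inl, Sum.elim_inr, Real.norm_eq_abs, sq_abs]
  have hE : (∑ p : SymIdx n, encE1 α₁ ΔE p ^ 2) + (∑ p : SkewIdx n, encE2 α₁ ΔE p ^ 2)
      = α₁ ^ 2 * frob ΔE ^ 2 := by
    rw [frob_sq, ← herm_sum ΔE hH]
    unfold encE1 encE2
    simp only [mul_pow]
    rw [← Finset.mul_sum, ← Finset.mul_sum]
    ring
  have hsplit : ∀ {a b : ℕ} (X : Matrix (Fin b) (Fin a) ℂ) (c : ℝ),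
      (∑ pr : Fin a × Fin b, encV c (reM X) pr ^ 2) + (∑ pr : Fin a × Fin b, encV c (imM X) pr ^ 2)
        = c ^ 2 * frob X ^ 2 := by
    intro a b X c
    unfold encV
    rw [sq_sum_swap, sq_sum_swap, frob_sq]
    simp only [reM, imM, Matrix.map_apply, Finset.sum_add_distrib]
    ring
  have hF := hsplit ΔF α₂
  have hG := hsplit ΔG α₃
  have hq : (∑ i, (β₁ * reV Δq i) ^ 2) + (∑ i, (β₁ * imV Δq i) ^ 2)
      = β₁ ^ 2 * eunorm Δq ^ 2 := by
    rw [eunorm_sq_complex]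
    simp only [Sum.elim_inl, Sum.elim_inr, reV, imV, mul_pow, Finset.sum_add_distrib]
    rw [← Finset.mul_sum, ← Finset.mul_sum]
    ring
  have hr : (∑ i, (β₂ * reV Δr i) ^ 2) + (∑ i, (β₂ * imV Δr i) ^ 2)
      = β₂ ^ 2 * eunorm Δr ^ 2 := by
    rw [eunorm_sq_complex]
    simp only [Sum.elim_inl, Sum.elim_inr, reV, imV, mul_pow, Finset.sum_add_distrib]
    rw [← Finset.mul_sum, ← Finset.mul_sum]
    ring
  linear_combination hE + hF + hG + hq + hr

end Aux7

section Aux8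
open Matrix

lemma claimC {n m : ℕ} (α₁ α₂ α₃ β₁ β₂ : ℝ)
    (h1 : α₁ ≠ 0) (h2 : α₂ ≠ 0) (h3 : α₃ ≠ 0) (h4 : β₁ ≠ 0) (h5 : β₂ ≠ 0)
    (x : ((SymIdx n ⊕ SkewIdx n) ⊕
      (((Fin n × Fin m) ⊕ (Fin n × Fin m)) ⊕ ((Fin m × Fin m) ⊕ (Fin m × Fin m)))) ⊕
      ((Fin n ⊕ Fin n) ⊕ (Fin m ⊕ Fin m)) → ℝ) :
    ∃ (ΔE : Matrix (Fin n) (Fin n) ℂ) (ΔF : Matrix (Fin m) (Fin n) ℂ)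
      (ΔG : Matrix (Fin m) (Fin m) ℂ) (Δq : Fin n → ℂ) (Δr : Fin m → ℂ),
      ΔE.IsHermitian ∧ encodeV α₁ α₂ α₃ β₁ β₂ ΔE ΔF ΔG Δq Δr = x := by
  set xS : SymIdx n → ℝ := fun p => x (Sum.inl (Sum.inl (Sum.inl p))) with hxS
  set xK : SkewIdx n → ℝ := fun p => x (Sum.inl (Sum.inl (Sum.inr p))) with hxK
  set a2 : ℝ := (α₁ * Real.sqrt 2)⁻¹ with ha2
  refine ⟨Matrix.of (fun i j =>
      Complex.mk
        (if h : j ≤ i then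
          (if i = j then α₁⁻¹ * xS ⟨(i, j), h⟩ else a2 * xS ⟨(i, j), h⟩)
         else a2 * xS ⟨(j, i), le_of_not_ge h⟩)
        (if h : j < i then a2 * xK ⟨(i, j), h⟩
         else if h' : i < j then -(a2 * xK ⟨(j, i), h'⟩) else 0)),
    Matrix.of (fun i j => Complex.mk
        (α₂⁻¹ * x (Sum.inl (Sum.inr (Sum.inl (Sum.inl (j, i))))))
        (α₂⁻¹ * x (Sum.inl (Sum.inr (Sum.inl (Sum.inr (j, i))))))),
    Matrix.of (fun i j => Complex.mk
        (α₃⁻¹ * x (Sum.inl (Sum.inr (Sum.inr (Sum.inl (j, i))))))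
        (α₃⁻¹ * x (Sum.inl (Sum.inr (Sum.inr (Sum.inr (j, i))))))),
    fun i => Complex.mk (β₁⁻¹ * x (Sum.inr (Sum.inl (Sum.inl i))))
        (β₁⁻¹ * x (Sum.inr (Sum.inl (Sum.inr i)))),
    fun i => Complex.mk (β₂⁻¹ * x (Sum.inr (Sum.inr (Sum.inl i))))
        (β₂⁻¹ * x (Sum.inr (Sum.inr (Sum.inr i)))),
    ?_, ?_⟩
  · -- Hermitian
    apply Matrix.IsHermitian.ext
    intro i j
    rcases lt_trichotomy i j with hij | rfl | hij
    · have h1 : ¬ ((j : Fin n) ≤ i) := not_le.mpr hij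
      have h2 : ¬ ((j : Fin n) < i) := not_lt.mpr hij.le
      have h3 : ¬ ((j : Fin n) = i) := hij.ne'
      apply Complex.ext <;>
        simp [RCLike.star_def, Complex.conj_re, Complex.conj_im, of_apply,
          hij, hij.le, h1, h2, h3]
    · apply Complex.ext <;>
        simp [RCLike.star_def, Complex.conj_re, Complex.conj_im, of_apply, lt_irrefl]
    · have h1 : ¬ ((i : Fin n) ≤ j) := not_le.mpr hij
      have h2 : ¬ ((i : Fin n) < j) := not_lt.mpr hij.le
      have h3 : ¬ ((i : Fin n) = j) := hij.ne'
      apply Complex.ext <;>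
        simp [RCLike.star_def, Complex.conj_re, Complex.conj_im, of_apply,
          hij, hij.le, h1, h2, h3]
  · funext s
    rcases s with ((p | p) | ((pr | pr) | (pr | pr))) | ((i | i) | (i | i))
    · -- symmetric component
      show encE1 α₁ _ p = xS p
      obtain ⟨⟨i, j⟩, hji⟩ := p
      rcases eq_or_ne i j with rfl | hij
      · simp only [encE1, of_apply, if_pos rfl, dif_pos hji, one_mul, ↓reduceIte]
        field_simp
      · have : ¬ (i = j) := hij
        simp only [encE1, of_apply, dif_pos hji, if_neg this, ha2, mul_inv]
        field_simp
    · show encE2 α₁ _ p = xK p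
      obtain ⟨⟨i, j⟩, hji⟩ := p
      simp only [encE2, of_apply, dif_pos hji, ha2, mul_inv]
      field_simp
    · show encV α₂ _ pr = _
      simp only [encV, reM, Matrix.map_apply, of_apply]
      field_simp
    · show encV α₂ _ pr = _
      simp only [encV, imM, Matrix.map_apply, of_apply]
      field_simp
    · show encV α₃ _ pr = _
      simp only [encV, reM, Matrix.map_apply, of_apply]
      field_simp
    · show encV α₃ _ pr = _
      simp only [encV, imM, Matrix.map_apply, of_apply]
      field_simp
    · show β₁ * _ = _
      simp only [Sum.elim_inl, reV]
      field_simp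
    · show β₁ * _ = _
      simp only [Sum.elim_inr, imV]
      field_simp
    · show β₂ * _ = _
      simp only [Sum.elim_inl, reV]
      field_simp
    · show β₂ * _ = _
      simp only [Sum.elim_inr, imV]
      field_simp

end Aux8

section Aux9
open Matrix

/-- The coefficient matrix `M`. -/
def Mmat (n m : ℕ) (uh : Fin n → ℂ) (ph : Fin m → ℂ) (α₁ α₂ α₃ β₁ β₂ : ℝ) :
    Matrix ((Fin n ⊕ Fin n) ⊕ (Fin m ⊕ Fin m))
      (((SymIdx n ⊕ SkewIdx n) ⊕
        (((Fin n × Fin m) ⊕ (Fin n × Fin m)) ⊕ ((Fin m × Fin m) ⊕ (Fin m × Fin m)))) ⊕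
        ((Fin n ⊕ Fin n) ⊕ (Fin m ⊕ Fin m))) ℝ :=
  fromBlocks
    (fromCols
      (fromRows
        (fromCols (α₁⁻¹ • (rowKronId (reV uh) * (JS n * (DS n)⁻¹)))
          ((-(α₁⁻¹)) • (rowKronId (imV uh) * (JSK n * (DSK n)⁻¹))))
        (fromCols (α₁⁻¹ • (rowKronId (imV uh) * (JS n * (DS n)⁻¹)))
          (α₁⁻¹ • (rowKronId (reV uh) * (JSK n * (DSK n)⁻¹)))))
      (fromCols
        (fromRows
          (fromCols (α₂⁻¹ • idKronRow (reV ph)) (α₂⁻¹ • idKronRow (imV ph)))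
          (fromCols (α₂⁻¹ • idKronRow (imV ph)) ((-(α₂⁻¹)) • idKronRow (reV ph))))
        0))
    (fromCols ((-(β₁⁻¹)) • (1 : Matrix (Fin n ⊕ Fin n) (Fin n ⊕ Fin n) ℝ)) 0)
    (fromCols 0
      (fromCols
        (fromRows
          (fromCols (α₂⁻¹ • rowKronId (reV uh)) ((-(α₂⁻¹)) • rowKronId (imV uh)))
          (fromCols (α₂⁻¹ • rowKronId (imV uh)) (α₂⁻¹ • rowKronId (reV uh))))
        (fromRows
          (fromCols (α₃⁻¹ • rowKronId (reV ph)) ((-(α₃⁻¹)) • rowKronId (imV ph)))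
          (fromCols (α₃⁻¹ • rowKronId (imV ph)) (α₃⁻¹ • rowKronId (reV ph))))))
    (fromCols 0 ((-(β₂⁻¹)) • (1 : Matrix (Fin m ⊕ Fin m) (Fin m ⊕ Fin m) ℝ)))

lemma Mt_inj (n m : ℕ) (uh : Fin n → ℂ) (ph : Fin m → ℂ) (α₁ α₂ α₃ β₁ β₂ : ℝ)
    (h4 : β₁ ≠ 0) (h5 : β₂ ≠ 0) (v : (Fin n ⊕ Fin n) ⊕ (Fin m ⊕ Fin m) → ℝ)
    (hv : (Mmat n m uh ph α₁ α₂ α₃ β₁ β₂)ᵀ *ᵥ v = 0) : v = 0 := by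
  funext s
  rcases s with s | s
  · have h := congrFun hv (Sum.inr (Sum.inl s))
    simp only [Mmat, transpose_apply, mulVec, dotProduct, Fintype.sum_sum_type,
      fromBlocks_apply₁₂, fromBlocks_apply₂₂, fromCols, of_apply, Sum.elim_inl,
      Matrix.smul_apply, Matrix.one_apply, Matrix.zero_apply, smul_eq_mul, mul_ite, mul_one,
      mul_zero, zero_mul, ite_mul, Finset.sum_ite_eq, Finset.sum_ite_eq', Finset.mem_univ,
      if_true, Finset.sum_const_zero, add_zero, zero_add, Pi.zero_apply, neg_mul] at h
    have : β₁⁻¹ ≠ 0 := inv_ne_zero h4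
    simp only [Pi.zero_apply]
    by_contra hne
    exact absurd h (by simp [this, hne])
  · have h := congrFun hv (Sum.inr (Sum.inr s))
    simp only [Mmat, transpose_apply, mulVec, dotProduct, Fintype.sum_sum_type,
      fromBlocks_apply₁₂, fromBlocks_apply₂₂, fromCols, of_apply, Sum.elim_inr,
      Matrix.smul_apply, Matrix.one_apply, Matrix.zero_apply, smul_eq_mul, mul_ite, mul_one,
      mul_zero, zero_mul, ite_mul, Finset.sum_ite_eq, Finset.sum_ite_eq', Finset.mem_univ,
      if_true, Finset.sum_const_zero, add_zero, zero_add, Pi.zero_apply, neg_mul] at h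
    have : β₂⁻¹ ≠ 0 := inv_ne_zero h5
    simp only [Pi.zero_apply]
    by_contra hne
    exact absurd h (by simp [this, hne])

end Aux9

section Aux10
open Matrix

lemma unitMMt (n m : ℕ) (uh : Fin n → ℂ) (ph : Fin m → ℂ) (α₁ α₂ α₃ β₁ β₂ : ℝ)
    (h4 : β₁ ≠ 0) (h5 : β₂ ≠ 0) :
    IsUnit (Mmat n m uh ph α₁ α₂ α₃ β₁ β₂ * (Mmat n m uh ph α₁ α₂ α₃ β₁ β₂)ᵀ) := by
  set M := Mmat n m uh ph α₁ α₂ α₃ β₁ β₂ with hM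
  rw [← Matrix.mulVec_injective_iff_isUnit]
  intro v v' hvv
  have h0 : (M * Mᵀ) *ᵥ (v - v') = 0 := by
    rw [mulVec_sub, hvv, sub_self]
  have h1 : Mᵀ *ᵥ (v - v') = 0 := by
    have hdot : (Mᵀ *ᵥ (v - v')) ⬝ᵥ (Mᵀ *ᵥ (v - v')) = 0 := by
      rw [dotProduct_mulVec, vecMul_transpose, mulVec_mulVec, h0, zero_dotProduct]
    exact dotProduct_self_eq_zero.mp hdot
  have := Mt_inj n m uh ph α₁ α₂ α₃ β₁ β₂ h4 h5 _ h1
  exact sub_eq_zero.mp this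

lemma min_norm (n m : ℕ) (uh : Fin n → ℂ) (ph : Fin m → ℂ) (α₁ α₂ α₃ β₁ β₂ : ℝ)
    (h4 : β₁ ≠ 0) (h5 : β₂ ≠ 0)
    (w : (Fin n ⊕ Fin n) ⊕ (Fin m ⊕ Fin m) → ℝ) :
    (Mmat n m uh ph α₁ α₂ α₃ β₁ β₂ *ᵥ
      ((Mmat n m uh ph α₁ α₂ α₃ β₁ β₂)ᵀ *ᵥ
        ((Mmat n m uh ph α₁ α₂ α₃ β₁ β₂ * (Mmat n m uh ph α₁ α₂ α₃ β₁ β₂)ᵀ)⁻¹ *ᵥ w)) = w)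
    ∧ ∀ y, Mmat n m uh ph α₁ α₂ α₃ β₁ β₂ *ᵥ y = w →
        eunorm ((Mmat n m uh ph α₁ α₂ α₃ β₁ β₂)ᵀ *ᵥ
          ((Mmat n m uh ph α₁ α₂ α₃ β₁ β₂ * (Mmat n m uh ph α₁ α₂ α₃ β₁ β₂)ᵀ)⁻¹ *ᵥ w))
          ≤ eunorm y := by
  set M := Mmat n m uh ph α₁ α₂ α₃ β₁ β₂ with hM
  have hunit : IsUnit (M * Mᵀ) := unitMMt n m uh ph α₁ α₂ α₃ β₁ β₂ h4 h5
  have hKinv : (M * Mᵀ) * (M * Mᵀ)⁻¹ = 1 :=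
    Matrix.mul_nonsing_inv _ ((Matrix.isUnit_iff_isUnit_det _).mp hunit)
  set x₀ := Mᵀ *ᵥ ((M * Mᵀ)⁻¹ *ᵥ w) with hx₀
  have hMx₀ : M *ᵥ x₀ = w := by
    rw [hx₀, mulVec_mulVec, mulVec_mulVec, hKinv, one_mulVec]
  refine ⟨hMx₀, fun y hy => ?_⟩
  have horth : x₀ ⬝ᵥ (y - x₀) = 0 := by
    have step : x₀ ⬝ᵥ (y - x₀) = ((M * Mᵀ)⁻¹ *ᵥ w) ⬝ᵥ (M *ᵥ (y - x₀)) := by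
      rw [dotProduct_mulVec, hx₀, mulVec_transpose]
    rw [step, mulVec_sub, hy, hMx₀, sub_self, dotProduct_zero]
  have hd : ∑ i, x₀ i * (y i - x₀ i) = 0 := by
    have := horth
    simpa [dotProduct, Pi.sub_apply] using this
  have hsum : (∑ i, y i ^ 2) = (∑ i, x₀ i ^ 2) + (∑ i, (y i - x₀ i) ^ 2)
      + 2 * ∑ i, x₀ i * (y i - x₀ i) := by
    rw [Finset.mul_sum, ← Finset.sum_add_distrib, ← Finset.sum_add_distrib]
    exact Finset.sum_congr rfl fun i _ => by ring
  have hle : (∑ i, x₀ i ^ 2) ≤ ∑ i, y i ^ 2 := by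
    have h2 : (0:ℝ) ≤ ∑ i, (y i - x₀ i) ^ 2 := Finset.sum_nonneg fun i _ => sq_nonneg _
    rw [hsum, hd]
    linarith
  rw [eunorm, eunorm]
  apply Real.sqrt_le_sqrt
  simpa [Real.norm_eq_abs, sq_abs] using hle

end Aux10

section Main
open Matrix

lemma mainLem (n m : ℕ) (E : Matrix (Fin n) (Fin n) ℂ)
    (F : Matrix (Fin m) (Fin n) ℂ) (G : Matrix (Fin m) (Fin m) ℂ)
    (q : Fin n → ℂ) (r : Fin m → ℂ) (uh : Fin n → ℂ) (ph : Fin m → ℂ)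
    (α₁ α₂ α₃ β₁ β₂ : ℝ)
    (h1 : α₁ ≠ 0) (h2 : α₂ ≠ 0) (h3 : α₃ ≠ 0) (h4 : β₁ ≠ 0) (h5 : β₂ ≠ 0) :
    IsUnit (Mmat n m uh ph α₁ α₂ α₃ β₁ β₂ * (Mmat n m uh ph α₁ α₂ α₃ β₁ β₂)ᵀ) ∧
      IsLeast
        {t : ℝ | ∃ (ΔE : Matrix (Fin n) (Fin n) ℂ) (ΔF : Matrix (Fin m) (Fin n) ℂ)
            (ΔG : Matrix (Fin m) (Fin m) ℂ) (Δq : Fin n → ℂ) (Δr : Fin m → ℂ),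
            ΔE.IsHermitian ∧
            (E + ΔE) *ᵥ uh + (F + ΔF)ᴴ *ᵥ ph = q + Δq ∧
            (F + ΔF) *ᵥ uh + (G + ΔG) *ᵥ ph = r + Δr ∧
            t = zeta1 α₁ α₂ α₃ β₁ β₂ ΔE ΔF ΔG Δq Δr}
        (eunorm (((Mmat n m uh ph α₁ α₂ α₃ β₁ β₂)ᵀ *
            (Mmat n m uh ph α₁ α₂ α₃ β₁ β₂ * (Mmat n m uh ph α₁ α₂ α₃ β₁ β₂)ᵀ)⁻¹) *ᵥ
          Sum.elim
            (Sum.elim (reV (q - E *ᵥ uh - Fᴴ *ᵥ ph)) (imV (q - E *ᵥ uh - Fᴴ *ᵥ ph)))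
            (Sum.elim (reV (r - F *ᵥ uh - G *ᵥ ph)) (imV (r - F *ᵥ uh - G *ᵥ ph))))) := by
  set M := Mmat n m uh ph α₁ α₂ α₃ β₁ β₂ with hMdef
  set w : (Fin n ⊕ Fin n) ⊕ (Fin m ⊕ Fin m) → ℝ :=
    Sum.elim
      (Sum.elim (reV (q - E *ᵥ uh - Fᴴ *ᵥ ph)) (imV (q - E *ᵥ uh - Fᴴ *ᵥ ph)))
      (Sum.elim (reV (r - F *ᵥ uh - G *ᵥ ph)) (imV (r - F *ᵥ uh - G *ᵥ ph))) with hw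
  have hA : ∀ (ΔE : Matrix (Fin n) (Fin n) ℂ) (ΔF : Matrix (Fin m) (Fin n) ℂ)
      (ΔG : Matrix (Fin m) (Fin m) ℂ) (Δq : Fin n → ℂ) (Δr : Fin m → ℂ),
      ΔE.IsHermitian →
      M *ᵥ encodeV α₁ α₂ α₃ β₁ β₂ ΔE ΔF ΔG Δq Δr =
        Sum.elim
          (Sum.elim (reV (ΔE *ᵥ uh + ΔFᴴ *ᵥ ph - Δq)) (imV (ΔE *ᵥ uh + ΔFᴴ *ᵥ ph - Δq)))
          (Sum.elim (reV (ΔF *ᵥ uh + ΔG *ᵥ ph - Δr)) (imV (ΔF *ᵥ uh + ΔG *ᵥ ph - Δr))) :=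
    fun ΔE ΔF ΔG Δq Δr hH =>
      claimA uh ph α₁ α₂ α₃ β₁ β₂ h1 h2 h3 h4 h5 ΔE ΔF ΔG Δq Δr hH
  obtain ⟨hMx₀, hmin⟩ := min_norm n m uh ph α₁ α₂ α₃ β₁ β₂ h4 h5 w
  refine ⟨unitMMt n m uh ph α₁ α₂ α₃ β₁ β₂ h4 h5, ?_, ?_⟩
  · -- membership
    obtain ⟨ΔE, ΔF, ΔG, Δq, Δr, hH, henc⟩ :=
      claimC α₁ α₂ α₃ β₁ β₂ h1 h2 h3 h4 h5 (Mᵀ *ᵥ ((M * Mᵀ)⁻¹ *ᵥ w))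
    have hres : Sum.elim
        (Sum.elim (reV (ΔE *ᵥ uh + ΔFᴴ *ᵥ ph - Δq)) (imV (ΔE *ᵥ uh + ΔFᴴ *ᵥ ph - Δq)))
        (Sum.elim (reV (ΔF *ᵥ uh + ΔG *ᵥ ph - Δr)) (imV (ΔF *ᵥ uh + ΔG *ᵥ ph - Δr))) = w := by
      rw [← hA ΔE ΔF ΔG Δq Δr hH, henc]
      exact hMx₀
    have hC1 : ΔE *ᵥ uh + ΔFᴴ *ᵥ ph - Δq = q - E *ᵥ uh - Fᴴ *ᵥ ph := by
      funext i
      have hr1 := congrFun hres (Sum.inl (Sum.inl i))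
      have hi1 := congrFun hres (Sum.inl (Sum.inr i))
      simp only [hw, Sum.elim_inl, Sum.elim_inr] at hr1 hi1
      exact Complex.ext hr1 hi1
    have hC2 : ΔF *ᵥ uh + ΔG *ᵥ ph - Δr = r - F *ᵥ uh - G *ᵥ ph := by
      funext i
      have hr1 := congrFun hres (Sum.inr (Sum.inl i))
      have hi1 := congrFun hres (Sum.inr (Sum.inr i))
      simp only [hw, Sum.elim_inl, Sum.elim_inr] at hr1 hi1
      exact Complex.ext hr1 hi1
    refine ⟨ΔE, ΔF, ΔG, Δq, Δr, hH, ?_, ?_, ?_⟩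
    · rw [add_mulVec, conjTranspose_add, add_mulVec]
      funext i
      have hii := congrFun hC1 i
      simp only [Pi.add_apply, Pi.sub_apply] at hii ⊢
      linear_combination hii
    · rw [add_mulVec, add_mulVec]
      funext i
      have hii := congrFun hC2 i
      simp only [Pi.add_apply, Pi.sub_apply] at hii ⊢
      linear_combination hii
    · rw [← mulVec_mulVec, ← henc]
      exact claimB α₁ α₂ α₃ β₁ β₂ ΔE ΔF ΔG Δq Δr hH
  · -- lower bound
    rintro t ⟨ΔE, ΔF, ΔG, Δq, Δr, hH, hc1, hc2, rfl⟩
    have hres1 : ΔE *ᵥ uh + ΔFᴴ *ᵥ ph - Δq = q - E *ᵥ uh - Fᴴ *ᵥ ph := by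
      rw [add_mulVec, conjTranspose_add, add_mulVec] at hc1
      funext i
      have hii := congrFun hc1 i
      simp only [Pi.add_apply, Pi.sub_apply] at hii ⊢
      linear_combination hii
    have hres2 : ΔF *ᵥ uh + ΔG *ᵥ ph - Δr = r - F *ᵥ uh - G *ᵥ ph := by
      rw [add_mulVec, add_mulVec] at hc2
      funext i
      have hii := congrFun hc2 i
      simp only [Pi.add_apply, Pi.sub_apply] at hii ⊢
      linear_combination hii
    have hMenc : M *ᵥ encodeV α₁ α₂ α₃ β₁ β₂ ΔE ΔF ΔG Δq Δr = w := by
      rw [hA ΔE ΔF ΔG Δq Δr hH, hres1, hres2]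
    have hle := hmin _ hMenc
    rw [← mulVec_mulVec]
    calc eunorm (Mᵀ *ᵥ ((M * Mᵀ)⁻¹ *ᵥ w))
        ≤ eunorm (encodeV α₁ α₂ α₃ β₁ β₂ ΔE ΔF ΔG Δq Δr) := hle
      _ = zeta1 α₁ α₂ α₃ β₁ β₂ ΔE ΔF ΔG Δq Δr :=
        claimB α₁ α₂ α₃ β₁ β₂ ΔE ΔF ΔG Δq Δr hH

end Main
/-- Corollary 3.3: structured backward error for case (i)
without preserving sparsity. -/
theorem structured_BE_case_i_no_sparsity
    (n m : ℕ) (E : Matrix (Fin n) (Fin n) ℂ) (hE : E.IsHermitian)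
    (F : Matrix (Fin m) (Fin n) ℂ) (G : Matrix (Fin m) (Fin m) ℂ)
    (q : Fin n → ℂ) (r : Fin m → ℂ) (uh : Fin n → ℂ) (ph : Fin m → ℂ)
    (α₁ α₂ α₃ β₁ β₂ : ℝ)
    (hα₁ : 0 < α₁) (hα₂ : 0 < α₂) (hα₃ : 0 < α₃) (hβ₁ : 0 < β₁) (hβ₂ : 0 < β₂) :
    let Q : Fin n → ℂ := q - E *ᵥ uh - Fᴴ *ᵥ ph
    let R : Fin m → ℂ := r - F *ᵥ uh - G *ᵥ ph
    let Y₁ : Matrix (Fin n ⊕ Fin n)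
        ((SymIdx n ⊕ SkewIdx n) ⊕
          (((Fin n × Fin m) ⊕ (Fin n × Fin m)) ⊕ ((Fin m × Fin m) ⊕ (Fin m × Fin m)))) ℝ :=
      fromCols
        (fromRows
          (fromCols (α₁⁻¹ • (rowKronId (reV uh) * (JS n * (DS n)⁻¹)))
            ((-(α₁⁻¹)) • (rowKronId (imV uh) * (JSK n * (DSK n)⁻¹))))
          (fromCols (α₁⁻¹ • (rowKronId (imV uh) * (JS n * (DS n)⁻¹)))
            (α₁⁻¹ • (rowKronId (reV uh) * (JSK n * (DSK n)⁻¹)))))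
        (fromCols
          (fromRows
            (fromCols (α₂⁻¹ • idKronRow (reV ph)) (α₂⁻¹ • idKronRow (imV ph)))
            (fromCols (α₂⁻¹ • idKronRow (imV ph)) ((-(α₂⁻¹)) • idKronRow (reV ph))))
          0)
    let Y₂ : Matrix (Fin m ⊕ Fin m)
        ((SymIdx n ⊕ SkewIdx n) ⊕
          (((Fin n × Fin m) ⊕ (Fin n × Fin m)) ⊕ ((Fin m × Fin m) ⊕ (Fin m × Fin m)))) ℝ :=
      fromCols 0
        (fromCols
          (fromRows
            (fromCols (α₂⁻¹ • rowKronId (reV uh)) ((-(α₂⁻¹)) • rowKronId (imV uh)))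
            (fromCols (α₂⁻¹ • rowKronId (imV uh)) (α₂⁻¹ • rowKronId (reV uh))))
          (fromRows
            (fromCols (α₃⁻¹ • rowKronId (reV ph)) ((-(α₃⁻¹)) • rowKronId (imV ph)))
            (fromCols (α₃⁻¹ • rowKronId (imV ph)) (α₃⁻¹ • rowKronId (reV ph)))))
    let I₁ : Matrix (Fin n ⊕ Fin n) ((Fin n ⊕ Fin n) ⊕ (Fin m ⊕ Fin m)) ℝ :=
      fromCols ((-(β₁⁻¹)) • (1 : Matrix (Fin n ⊕ Fin n) (Fin n ⊕ Fin n) ℝ)) 0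
    let I₂ : Matrix (Fin m ⊕ Fin m) ((Fin n ⊕ Fin n) ⊕ (Fin m ⊕ Fin m)) ℝ :=
      fromCols 0 ((-(β₂⁻¹)) • (1 : Matrix (Fin m ⊕ Fin m) (Fin m ⊕ Fin m) ℝ))
    let M := fromBlocks Y₁ I₁ Y₂ I₂
    let w : (Fin n ⊕ Fin n) ⊕ (Fin m ⊕ Fin m) → ℝ :=
      Sum.elim (Sum.elim (reV Q) (imV Q)) (Sum.elim (reV R) (imV R))
    IsUnit (M * Mᵀ) ∧
      IsLeast
        {t : ℝ | ∃ (ΔE : Matrix (Fin n) (Fin n) ℂ) (ΔF : Matrix (Fin m) (Fin n) ℂ)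
            (ΔG : Matrix (Fin m) (Fin m) ℂ) (Δq : Fin n → ℂ) (Δr : Fin m → ℂ),
            ΔE.IsHermitian ∧
            (E + ΔE) *ᵥ uh + (F + ΔF)ᴴ *ᵥ ph = q + Δq ∧
            (F + ΔF) *ᵥ uh + (G + ΔG) *ᵥ ph = r + Δr ∧
            t = zeta1 α₁ α₂ α₃ β₁ β₂ ΔE ΔF ΔG Δq Δr}
        (eunorm ((Mᵀ * (M * Mᵀ)⁻¹) *ᵥ w)) := by
  intro Q R Y₁ Y₂ I₁ I₂ M w
  exact mainLem n m E F G q r uh ph α₁ α₂ α₃ β₁ β₂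
    hα₁.ne' hα₂.ne' hα₃.ne' hβ₁.ne' hβ₂.ne'

end GSPPBE
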